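/- Let Λ be a finite index set and let (ξ_i)_{i∈Λ} be random variables on a probability space, each ξ_i taking values in a measurable space. Suppose that for any two distinct indices i, j ∈ Λ there exists a subset I ⊆ Λ containing exactly one element of {i, j} such that the family ξ_I = (ξ_k)_{k∈I} is independent of the family ξ_{Λ∖I} = (ξ_k)_{k∈Λ∖I}. Then the random variables (ξ_i)_{i∈Λ} are mutually independent. -/

import Mathlib

open MeasureTheory ProbabilityTheory

private lemma indep_of_T0_splittings_aux {Ω : Type*} [MeasureSpace Ω]
    [IsProbabilityMeasure (ℙ : Measure Ω)] :
    ∀ n : ℕ, ∀ {Λ : Type*} [Fintype Λ], Fintype.card Λ ≤ n →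
      ∀ {E : Λ → Type*} [∀ i, MeasurableSpace (E i)] (ξ : ∀ i, Ω → E i),
      (∀ i j : Λ, i ≠ j → ∃ I : Set Λ,
        ((i ∈ I ∧ j ∉ I) ∨ (j ∈ I ∧ i ∉ I)) ∧
        IndepFun (fun ω => (fun k : I => ξ k ω)) (fun ω => (fun k : ↥Iᶜ => ξ k ω)) ℙ) →
      iIndepFun ξ ℙ := by
  intro n
  induction n with
  | zero =>
    intro Λ _ hcard E _ ξ h
    have : IsEmpty Λ := Fintype.card_eq_zero_iff.mp (Nat.le_zero.mp hcard)
    exact iIndepFun.of_subsingleton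
  | succ n ih =>
    intro Λ _ hcard E _ ξ h
    classical
    by_cases hsub : ∀ i j : Λ, i = j
    · have : Subsingleton Λ := ⟨hsub⟩
      exact iIndepFun.of_subsingleton
    push_neg at hsub
    obtain ⟨i, j, hij⟩ := hsub
    obtain ⟨I, hmem, hInd⟩ := h i j hij
    -- I misses a point and contains a point
    obtain ⟨x, hxI, y, hyI⟩ : ∃ x, x ∈ I ∧ ∃ y, y ∉ I := by
      rcases hmem with ⟨h1, h2⟩ | ⟨h1, h2⟩
      exacts [⟨i, h1, j, h2⟩, ⟨j, h1, i, h2⟩]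
    have hcardI : Fintype.card ↥I ≤ n := by
      have h1 := Fintype.card_subtype_lt (p := fun k => k ∈ I) hyI
      have h2 : Fintype.card {x // (fun k => k ∈ I) x} = Fintype.card ↥I :=
        Fintype.card_congr (Equiv.refl _)
      have h3 : Fintype.card ↥I < Fintype.card Λ := by convert h1 using 1
      omega
    have hcardIc : Fintype.card ↥Iᶜ ≤ n := by
      have h1 := Fintype.card_subtype_lt (p := fun k => k ∈ Iᶜ) (by simpa using hxI)
      have h2 : Fintype.card {x // (fun k => k ∈ Iᶜ) x} = Fintype.card ↥Iᶜ :=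
        Fintype.card_congr (Equiv.refl _)
      have h3 : Fintype.card ↥Iᶜ < Fintype.card Λ := by convert h1 using 1
      omega
    -- the hypothesis descends to any subset s of Λ
    have hdesc : ∀ (s : Set Λ), ∀ i' j' : ↥s, i' ≠ j' → ∃ I' : Set ↥s,
        ((i' ∈ I' ∧ j' ∉ I') ∨ (j' ∈ I' ∧ i' ∉ I')) ∧
        IndepFun (fun ω => (fun k : I' => ξ k ω)) (fun ω => (fun k : ↥I'ᶜ => ξ k ω)) ℙ := by
      intro s i' j' hne
      obtain ⟨J, hJmem, hJ⟩ := h i' j' (fun e => hne (Subtype.ext e))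
      refine ⟨Subtype.val ⁻¹' J, ?_, ?_⟩
      · rcases hJmem with ⟨h1, h2⟩ | ⟨h1, h2⟩
        exacts [Or.inl ⟨h1, h2⟩, Or.inr ⟨h1, h2⟩]
      · have hφ : Measurable (fun (z : ∀ k : J, E k) =>
            (fun k : (Subtype.val ⁻¹' J : Set ↥s) => z ⟨(k : ↥s), k.2⟩)) :=
          measurable_pi_lambda _ fun k => measurable_pi_apply _
        have hψ : Measurable (fun (z : ∀ k : ↥Jᶜ, E k) =>
            (fun k : ↥(Subtype.val ⁻¹' J : Set ↥s)ᶜ => z ⟨(k : ↥s), k.2⟩)) :=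
          measurable_pi_lambda _ fun k => measurable_pi_apply _
        exact hJ.comp hφ hψ
    have hI1 : iIndepFun (fun k : ↥I => ξ k) ℙ :=
      ih hcardI _ (hdesc I)
    have hI2 : iIndepFun (fun k : ↥Iᶜ => ξ k) ℙ :=
      ih hcardIc _ (hdesc Iᶜ)
    -- now combine
    rw [iIndepFun_iff_measure_inter_preimage_eq_mul]
    intro S sets hsets
    set F : Ω → ∀ k : I, E k := fun ω => fun k : I => ξ k ω with hF
    set G : Ω → ∀ k : ↥Iᶜ, E k := fun ω => fun k : ↥Iᶜ => ξ k ω with hG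
    set A : Set (∀ k : I, E k) := ⋂ (k : ↥I) (_ : (k : Λ) ∈ S), (fun z => z k) ⁻¹' sets k with hA
    set B : Set (∀ k : ↥Iᶜ, E k) :=
      ⋂ (k : ↥Iᶜ) (_ : (k : Λ) ∈ S), (fun z => z k) ⁻¹' sets k with hB
    have hAm : MeasurableSet A :=
      MeasurableSet.iInter fun k => MeasurableSet.iInter fun hk =>
        (measurable_pi_apply k) (hsets _ hk)
    have hBm : MeasurableSet B :=
      MeasurableSet.iInter fun k => MeasurableSet.iInter fun hk =>
        (measurable_pi_apply k) (hsets _ hk)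
    have e1 : F ⁻¹' A = ⋂ k ∈ S.filter (· ∈ I), ξ k ⁻¹' sets k := by
      ext ω
      simp only [hA, hF, Set.mem_preimage, Set.mem_iInter, Finset.mem_filter]
      constructor
      · rintro hx k ⟨hkS, hkI⟩
        exact hx ⟨k, hkI⟩ hkS
      · intro hx k hk
        exact hx k ⟨hk, k.2⟩
    have e2 : G ⁻¹' B = ⋂ k ∈ S.filter (· ∉ I), ξ k ⁻¹' sets k := by
      ext ω
      simp only [hB, hG, Set.mem_preimage, Set.mem_iInter, Finset.mem_filter]
      constructor
      · rintro hx k ⟨hkS, hkI⟩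
        exact hx ⟨k, hkI⟩ hkS
      · intro hx k hk
        exact hx k ⟨hk, k.2⟩
    have esplit : (⋂ k ∈ S, ξ k ⁻¹' sets k) = (F ⁻¹' A) ∩ (G ⁻¹' B) := by
      rw [e1, e2]
      ext ω
      simp only [Set.mem_iInter, Set.mem_inter_iff, Finset.mem_filter]
      constructor
      · exact fun H => ⟨fun k hk => H k hk.1, fun k hk => H k hk.1⟩
      · rintro ⟨H1, H2⟩ k hk
        by_cases hkI : k ∈ I
        exacts [H1 k ⟨hk, hkI⟩, H2 k ⟨hk, hkI⟩]
    have m1 : ℙ (F ⁻¹' A) = ∏ k ∈ S.filter (· ∈ I), ℙ (ξ k ⁻¹' sets k) := by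
      have key : F ⁻¹' A = ⋂ k ∈ S.subtype (· ∈ I), (fun ω => ξ (k : Λ) ω) ⁻¹' sets k := by
        rw [e1]
        ext ω
        simp only [Set.mem_iInter, Finset.mem_filter, Finset.mem_subtype, Set.mem_preimage]
        constructor
        · rintro hx k hk
          exact hx k ⟨hk, k.2⟩
        · intro hx k hk
          exact hx ⟨k, hk.2⟩ hk.1
      rw [key, hI1.measure_inter_preimage_eq_mul (S.subtype (· ∈ I))
        (sets := fun k : ↥I => sets k) (fun k hk => hsets _ (Finset.mem_subtype.mp hk))]
      exact Finset.prod_subtype_eq_prod_filter (fun k => ℙ (ξ k ⁻¹' sets k))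
    have m2 : ℙ (G ⁻¹' B) = ∏ k ∈ S.filter (· ∉ I), ℙ (ξ k ⁻¹' sets k) := by
      have key : G ⁻¹' B = ⋂ k ∈ S.subtype (· ∉ I), (fun ω => ξ (k : Λ) ω) ⁻¹' sets k := by
        rw [e2]
        ext ω
        simp only [Set.mem_iInter, Finset.mem_filter, Finset.mem_subtype, Set.mem_preimage]
        constructor
        · rintro hx k hk
          exact hx k ⟨hk, k.2⟩
        · intro hx k hk
          exact hx ⟨k, hk.2⟩ hk.1
      have : iIndepFun
          (fun k : {x : Λ // x ∉ I} => ξ k) ℙ := hI2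
      rw [key, this.measure_inter_preimage_eq_mul (S.subtype (· ∉ I))
        (sets := fun k : {x : Λ // x ∉ I} => sets k)
        (fun k hk => hsets _ (Finset.mem_subtype.mp hk))]
      exact Finset.prod_subtype_eq_prod_filter (fun k => ℙ (ξ k ⁻¹' sets k))
    rw [esplit, hInd.measure_inter_preimage_eq_mul A B hAm hBm, m1, m2,
      Finset.prod_filter_mul_prod_filter_not]

/-- if for any two distinct indices `i, j` there is a subset `I` of the index set
containing exactly one of `i, j` such that the family `(ξ k)_{k ∈ I}` is independent of the
family `(ξ k)_{k ∉ I}`, then the random variables `(ξ i)` are mutually independent. -/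
theorem indep_of_T0_splittings {Ω : Type*} [MeasureSpace Ω]
    [IsProbabilityMeasure (ℙ : Measure Ω)]
    {Λ : Type*} [Fintype Λ]
    {E : Λ → Type*} [∀ i, MeasurableSpace (E i)]
    (ξ : ∀ i, Ω → E i)
    (h : ∀ i j : Λ, i ≠ j → ∃ I : Set Λ,
      ((i ∈ I ∧ j ∉ I) ∨ (j ∈ I ∧ i ∉ I)) ∧
      IndepFun (fun ω => (fun k : I => ξ k ω)) (fun ω => (fun k : ↥Iᶜ => ξ k ω)) ℙ) :
    iIndepFun ξ ℙ :=
  indep_of_T0_splittings_aux (Fintype.card Λ) le_rfl ξ h
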